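/- For every feature f, λ > 0, the optimal SVM loss satisfies L*_SVM(f;λ) ≤ 1 − (1/(2λ))‖E[f(X)Y]‖² + (λ_T/λ − 1)⁺, where λ_T = M‖E[f(X)Y]‖ with M = max_x ‖f(x) − E[f(X)]‖. -/

import Mathlib

open RealInnerProductSpace

/-- For every feature `f` and `λ > 0`, the optimal SVM loss satisfies
`L*_SVM(f;λ) ≤ 1 - (1/(2λ))‖E[f(X)Y]‖² + (λ_T/λ - 1)⁺` where
`λ_T = M ‖E[f(X)Y]‖` and `M` bounds `‖f(x) - E[f(X)]‖` on the support;
i.e., some `(w,b)` achieves at most this loss. -/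
theorem stmt11 {Ω : Type*} [Fintype Ω] (p : Ω → ℝ)
    (hp : ∀ ω, 0 ≤ p ω) (hp1 : ∑ ω, p ω = 1)
    {d : ℕ} (f : Ω → EuclideanSpace ℝ (Fin d)) (Y : Ω → ℝ)
    (hY : ∀ ω, Y ω = 1 ∨ Y ω = -1) (hEY : ∑ ω, p ω * Y ω = 0)
    (lam : ℝ) (hlam : 0 < lam)
    (μ mf : EuclideanSpace ℝ (Fin d))
    (hμ : μ = ∑ ω, (p ω * Y ω) • f ω)
    (hmf : mf = ∑ ω, p ω • f ω)
    (M : ℝ) (hM : ∀ ω, 0 < p ω → ‖f ω - mf‖ ≤ M) :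
    ∃ (w : EuclideanSpace ℝ (Fin d)) (b : ℝ),
      (∑ ω, p ω * max (1 - Y ω * (⟪w, f ω⟫ + b)) 0) + lam / 2 * ‖w‖ ^ 2
        ≤ 1 - 1 / (2 * lam) * ‖μ‖ ^ 2 + max (M * ‖μ‖ / lam - 1) 0 := by
  set w : EuclideanSpace ℝ (Fin d) := lam⁻¹ • μ with hw
  refine ⟨w, -⟪w, mf⟫, ?_⟩
  set T : ℝ := M * ‖μ‖ / lam with hT
  have hwnorm : ‖w‖ = ‖μ‖ / lam := by
    rw [hw, norm_smul, Real.norm_eq_abs, abs_inv, abs_of_pos hlam]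
    ring
  have hterm : ∀ ω, p ω * max (1 - Y ω * (⟪w, f ω⟫ + -⟪w, mf⟫)) 0
      ≤ p ω * (1 - Y ω * ⟪w, f ω - mf⟫) + p ω * max (T - 1) 0 := by
    intro ω
    have hin : ⟪w, f ω⟫ + -⟪w, mf⟫ = ⟪w, f ω - mf⟫ := by
      rw [inner_sub_right]; ring
    rw [hin]
    rcases eq_or_lt_of_le (hp ω) with h0 | hpos
    · simp [← h0]
    · have hbound : Y ω * ⟪w, f ω - mf⟫ ≤ T := by
        have h1 : |Y ω * ⟪w, f ω - mf⟫| ≤ ‖w‖ * ‖f ω - mf‖ := by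
          rw [abs_mul]
          have hy : |Y ω| = 1 := by rcases hY ω with h | h <;> simp [h]
          rw [hy, one_mul]
          exact abs_real_inner_le_norm _ _
        have h2 : ‖w‖ * ‖f ω - mf‖ ≤ (‖μ‖ / lam) * M := by
          rw [hwnorm]
          exact mul_le_mul_of_nonneg_left (hM ω hpos) (by positivity)
        calc Y ω * ⟪w, f ω - mf⟫ ≤ |Y ω * ⟪w, f ω - mf⟫| := le_abs_self _
          _ ≤ (‖μ‖ / lam) * M := h1.trans h2
          _ = T := by rw [hT]; ring
      have key : max (1 - Y ω * ⟪w, f ω - mf⟫) 0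
          ≤ (1 - Y ω * ⟪w, f ω - mf⟫) + max (T - 1) 0 := by
        rcases le_total 0 (1 - Y ω * ⟪w, f ω - mf⟫) with h | h
        · rw [max_eq_left h]
          have := le_max_right (T - 1) (0 : ℝ)
          linarith
        · rw [max_eq_right h]
          have := le_max_left (T - 1) (0 : ℝ)
          linarith
      nlinarith [key, hpos.le]
  have hsum1 : ∑ ω, p ω * max (1 - Y ω * (⟪w, f ω⟫ + -⟪w, mf⟫)) 0
      ≤ ∑ ω, (p ω * (1 - Y ω * ⟪w, f ω - mf⟫) + p ω * max (T - 1) 0) :=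
    Finset.sum_le_sum fun ω _ => hterm ω
  have hvec : ∑ ω, (p ω * Y ω) • (f ω - mf) = μ := by
    have : ∑ ω, (p ω * Y ω) • (f ω - mf)
        = (∑ ω, (p ω * Y ω) • f ω) - (∑ ω, p ω * Y ω) • mf := by
      rw [Finset.sum_smul]
      rw [← Finset.sum_sub_distrib]
      exact Finset.sum_congr rfl fun ω _ => smul_sub _ _ _
    rw [this, hEY, ← hμ, zero_smul, sub_zero]
  have hsum2 : ∑ ω, p ω * (Y ω * ⟪w, f ω - mf⟫) = ⟪w, μ⟫ := by
    rw [← hvec, inner_sum]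
    refine Finset.sum_congr rfl fun ω _ => ?_
    rw [real_inner_smul_right]; ring
  have hwμ : ⟪w, μ⟫ = lam⁻¹ * ‖μ‖ ^ 2 := by
    rw [hw, real_inner_smul_left, real_inner_self_eq_norm_sq]
  have hsum3 : ∑ ω, (p ω * (1 - Y ω * ⟪w, f ω - mf⟫) + p ω * max (T - 1) 0)
      = 1 - lam⁻¹ * ‖μ‖ ^ 2 + max (T - 1) 0 := by
    rw [Finset.sum_add_distrib, ← Finset.sum_mul, hp1, one_mul]
    have : ∑ ω, p ω * (1 - Y ω * ⟪w, f ω - mf⟫)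
        = (∑ ω, p ω) - ∑ ω, p ω * (Y ω * ⟪w, f ω - mf⟫) := by
      rw [← Finset.sum_sub_distrib]
      exact Finset.sum_congr rfl fun ω _ => by ring
    rw [this, hp1, hsum2, hwμ]
  have hfinal : lam / 2 * ‖w‖ ^ 2 = 1 / (2 * lam) * ‖μ‖ ^ 2 := by
    rw [hwnorm]; field_simp
  calc (∑ ω, p ω * max (1 - Y ω * (⟪w, f ω⟫ + -⟪w, mf⟫)) 0) + lam / 2 * ‖w‖ ^ 2
      ≤ (1 - lam⁻¹ * ‖μ‖ ^ 2 + max (T - 1) 0) + 1 / (2 * lam) * ‖μ‖ ^ 2 := by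
        rw [← hsum3, ← hfinal]; exact add_le_add_left hsum1 _
    _ = 1 - 1 / (2 * lam) * ‖μ‖ ^ 2 + max (M * ‖μ‖ / lam - 1) 0 := by
        rw [hT]; field_simp; ring
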